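/- For every integer n ≥ 2 and every ε ∈ (0,1), there exists μ̂ > 0 such that for every μ > μ̂ the equation h(x, ε) = μ has exactly one solution x ∈ (1, ∞). -/

import Mathlib

/-- `k_n = (1/(4n)) · Σ_{k=1}^{n-1} 1/sin(kπ/n)` -/
noncomputable def kn (n : ℕ) : ℝ :=
  (1 / (4 * n)) * ∑ k ∈ Finset.Icc 1 (n - 1), 1 / Real.sin (k * Real.pi / n)

/-- `φ_k = (2k-1)π/n`, and `u_k = cos φ_k`. -/
noncomputable def phi (n k : ℕ) : ℝ := (2 * (k : ℝ) - 1) * Real.pi / n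

/-- The reduced central configuration function
`h(x, ε) = −n·k_n·(ε−x³)/(1−x³) − (x²/(1−x³))·Σ_{k=1}^{n} [x(1−ε) − (1−εx²)u_k]/(1+x²−2xu_k)^{3/2}`,
where `u_k = cos φ_k`.  Solutions of `h(x, ε) = μ` are the rosette central configurations. -/
noncomputable def h (n : ℕ) (x ε : ℝ) : ℝ :=
  -((n : ℝ) * kn n) * (ε - x ^ 3) / (1 - x ^ 3) -
    (x ^ 2 / (1 - x ^ 3)) * ∑ k ∈ Finset.Icc 1 n,
      (x * (1 - ε) - (1 - ε * x ^ 2) * Real.cos (phi n k)) /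
        (1 + x ^ 2 - 2 * x * Real.cos (phi n k)) ^ ((3 : ℝ) / 2)

namespace RosetteAux

open Real Set Filter Topology

/-- The sum part of `h`. -/
noncomputable def S (n : ℕ) (ε x : ℝ) : ℝ :=
  ∑ k ∈ Finset.Icc 1 n,
      (x * (1 - ε) - (1 - ε * x ^ 2) * Real.cos (phi n k)) /
        (1 + x ^ 2 - 2 * x * Real.cos (phi n k)) ^ ((3 : ℝ) / 2)

/-- The "numerator" function: `h x = F x / (1 - x^3)`. -/
noncomputable def F (n : ℕ) (ε x : ℝ) : ℝ :=
  -((n : ℝ) * kn n) * (ε - x ^ 3) - x ^ 2 * S n ε x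

lemma phi_mem (n k : ℕ) (hn : 2 ≤ n) (hk : k ∈ Finset.Icc 1 n) :
    phi n k / 2 ∈ Set.Ioo 0 Real.pi := by
  simp only [Finset.mem_Icc] at hk
  have hk1 : (1:ℝ) ≤ (k:ℝ) := by exact_mod_cast hk.1
  have hk2 : (k:ℝ) ≤ (n:ℝ) := by exact_mod_cast hk.2
  have hn0 : (0:ℝ) < (n:ℝ) := by positivity
  have hpi := Real.pi_pos
  constructor
  · have : (0:ℝ) < (2*(k:ℝ)-1) * Real.pi := by nlinarith
    unfold phi; positivity
  · unfold phi
    rw [div_div, div_lt_iff₀ (by positivity)]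
    nlinarith

lemma cos_phi_lt_one (n k : ℕ) (hn : 2 ≤ n) (hk : k ∈ Finset.Icc 1 n) :
    Real.cos (phi n k) < 1 := by
  obtain ⟨h0, h1⟩ := phi_mem n k hn hk
  have hs : 0 < Real.sin (phi n k / 2) := Real.sin_pos_of_pos_of_lt_pi h0 h1
  have h2 : Real.cos (2 * (phi n k / 2)) = 1 - 2 * Real.sin (phi n k / 2) ^ 2 := by
    rw [Real.cos_two_mul', Real.cos_sq']; ring
  rw [show phi n k = 2 * (phi n k / 2) by ring, h2]
  nlinarith [hs]

lemma Q_lower {x u : ℝ} (hx : 0 < x) (hu1 : -1 ≤ u) (hu2 : u < 1) :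
    (1 - u) / 2 * (1 + x ^ 2) ≤ 1 + x ^ 2 - 2 * x * u := by
  nlinarith [sq_nonneg (x - 1), mul_nonneg (by linarith : (0:ℝ) ≤ 1 + u) (sq_nonneg (x - 1)),
    mul_pos hx (by linarith : (0:ℝ) < 1 - u)]

lemma Q_pos {x u : ℝ} (hx : 0 < x) (hu1 : -1 ≤ u) (hu2 : u < 1) :
    0 < 1 + x ^ 2 - 2 * x * u := by
  nlinarith [Q_lower hx hu1 hu2, sq_nonneg x]

lemma kn_nonneg (n : ℕ) (hn : 2 ≤ n) : 0 ≤ kn n := by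
  unfold kn
  have hn0 : (0:ℝ) < (n:ℝ) := by positivity
  apply mul_nonneg (by positivity)
  apply Finset.sum_nonneg
  intro k hk
  simp only [Finset.mem_Icc] at hk
  have hk1 : (1:ℝ) ≤ (k:ℝ) := by exact_mod_cast hk.1
  have hk2 : (k:ℝ) ≤ (n:ℝ) - 1 := by
    have := hk.2
    have : (k:ℝ) ≤ ((n-1 : ℕ):ℝ) := by exact_mod_cast this
    rwa [Nat.cast_sub (by omega), Nat.cast_one] at this
  have hpi := Real.pi_pos
  have : 0 < Real.sin (k * Real.pi / n) := by
    apply Real.sin_pos_of_pos_of_lt_pi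
    · positivity
    · rw [div_lt_iff₀ hn0]; nlinarith
  positivity

/-- a uniform bound for `S`. -/
lemma S_bound (n : ℕ) (hn : 2 ≤ n) (ε : ℝ) (hε : ε ∈ Set.Ioo (0:ℝ) 1) :
    ∃ C : ℝ, 0 ≤ C ∧ ∀ x : ℝ, 0 < x → |S n ε x| ≤ C := by
  refine ⟨∑ k ∈ Finset.Icc 1 n,
    2 / (((1 - Real.cos (phi n k)) / 2) ^ ((3:ℝ)/2)), ?_, ?_⟩
  · apply Finset.sum_nonneg
    intro k hk
    have := cos_phi_lt_one n k hn hk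
    have hc : (0:ℝ) < (1 - Real.cos (phi n k)) / 2 := by linarith
    positivity
  · intro x hx
    unfold S
    refine (Finset.abs_sum_le_sum_abs _ _).trans (Finset.sum_le_sum ?_)
    intro k hk
    set u := Real.cos (phi n k) with hu
    have hu2 : u < 1 := cos_phi_lt_one n k hn hk
    have hu1 : -1 ≤ u := Real.neg_one_le_cos _
    set c : ℝ := (1 - u) / 2 with hc
    have hcpos : 0 < c := by rw [hc]; linarith
    have hQ : 0 < 1 + x ^ 2 - 2 * x * u := Q_pos hx hu1 hu2
    have hQl : c * (1 + x ^ 2) ≤ 1 + x ^ 2 - 2 * x * u := by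
      rw [hc]; exact Q_lower hx hu1 hu2
    have hx2 : (0:ℝ) < 1 + x ^ 2 := by positivity
    have hnum : |x * (1 - ε) - (1 - ε * x ^ 2) * u| ≤ 2 * (1 + x ^ 2) := by
      have h1 : |x * (1 - ε)| ≤ x := by
        rw [abs_of_nonneg (by nlinarith [hε.1, hε.2])]
        nlinarith [hε.1, hε.2]
      have h2 : |(1 - ε * x ^ 2) * u| ≤ 1 + x ^ 2 := by
        rw [abs_mul]
        have hu3 : |u| ≤ 1 := Real.abs_cos_le_one _
        have h4 : |1 - ε * x ^ 2| ≤ 1 + x ^ 2 := by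
          rw [abs_le]; constructor <;> nlinarith [hε.1.le, hε.2.le, sq_nonneg x]
        calc |1 - ε * x ^ 2| * |u| ≤ (1 + x^2) * 1 :=
              mul_le_mul h4 hu3 (abs_nonneg _) (by positivity)
          _ = 1 + x ^ 2 := by ring
      calc |x * (1 - ε) - (1 - ε * x ^ 2) * u| ≤ |x * (1-ε)| + |(1 - ε*x^2)*u| := abs_sub _ _
        _ ≤ x + (1 + x^2) := add_le_add h1 h2
        _ ≤ 2 * (1 + x^2) := by nlinarith [sq_nonneg (x-1)]
    have hden : c ^ ((3:ℝ)/2) * (1 + x ^ 2) ≤ (1 + x ^ 2 - 2 * x * u) ^ ((3:ℝ)/2) := by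
      have step1 : (c * (1 + x^2)) ^ ((3:ℝ)/2) ≤ (1 + x ^ 2 - 2 * x * u) ^ ((3:ℝ)/2) :=
        Real.rpow_le_rpow (by positivity) hQl (by norm_num)
      have step2 : (c * (1 + x^2)) ^ ((3:ℝ)/2) = c ^ ((3:ℝ)/2) * (1 + x^2) ^ ((3:ℝ)/2) :=
        Real.mul_rpow hcpos.le hx2.le
      have step3 : (1 + x^2) ^ ((1:ℝ)) ≤ (1 + x^2) ^ ((3:ℝ)/2) :=
        Real.rpow_le_rpow_of_exponent_le (by nlinarith) (by norm_num)
      rw [Real.rpow_one] at step3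
      calc c ^ ((3:ℝ)/2) * (1 + x ^ 2) ≤ c ^ ((3:ℝ)/2) * (1 + x^2) ^ ((3:ℝ)/2) := by
            apply mul_le_mul_of_nonneg_left step3 (by positivity)
        _ = (c * (1 + x^2)) ^ ((3:ℝ)/2) := step2.symm
        _ ≤ _ := step1
    have hdenpos : (0:ℝ) < (1 + x ^ 2 - 2 * x * u) ^ ((3:ℝ)/2) := Real.rpow_pos_of_pos hQ _
    rw [abs_div, abs_of_pos hdenpos]
    rw [div_le_div_iff₀ hdenpos (by positivity)]
    calc |x * (1 - ε) - (1 - ε * x ^ 2) * u| * (c ^ ((3:ℝ)/2))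
        ≤ (2 * (1 + x^2)) * (c ^ ((3:ℝ)/2)) := by
          apply mul_le_mul_of_nonneg_right hnum (by positivity)
      _ = 2 * (c ^ ((3:ℝ)/2) * (1 + x^2)) := by ring
      _ ≤ 2 * ((1 + x ^ 2 - 2 * x * u) ^ ((3:ℝ)/2)) := by
          apply mul_le_mul_of_nonneg_left hden (by norm_num)

lemma contDiffOn_S (n : ℕ) (hn : 2 ≤ n) (ε : ℝ) :
    ContDiffOn ℝ 1 (S n ε) (Set.Ioi (0:ℝ)) := by
  unfold S
  apply ContDiffOn.sum
  intro k hk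
  have hu2 := cos_phi_lt_one n k hn hk
  have hu1 := Real.neg_one_le_cos (phi n k)
  apply ContDiffOn.div
  · apply ContDiffOn.sub
    · exact (contDiff_id.mul contDiff_const).contDiffOn
    · exact ((contDiff_const.sub (contDiff_const.mul (contDiff_id.pow 2))).mul
        contDiff_const).contDiffOn
  · apply ContDiffOn.rpow_const_of_ne
    · apply ContDiffOn.sub
      · exact (contDiff_const.add (contDiff_id.pow 2)).contDiffOn
      · exact ((contDiff_const.mul contDiff_id).mul contDiff_const).contDiffOn
    · intro x hx
      exact (Q_pos hx hu1 hu2).ne'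
  · intro x hx
    exact (Real.rpow_pos_of_pos (Q_pos hx hu1 hu2) _).ne'

lemma contDiffOn_F (n : ℕ) (hn : 2 ≤ n) (ε : ℝ) :
    ContDiffOn ℝ 1 (F n ε) (Set.Ioi (0:ℝ)) := by
  unfold F
  apply ContDiffOn.sub
  · exact (contDiff_const.mul (contDiff_const.sub (contDiff_id.pow 3))).contDiffOn
  · exact ((contDiff_id.pow 2).contDiffOn.mul (contDiffOn_S n hn ε))

lemma h_eq (n : ℕ) (ε x : ℝ) (hx : x ^ 3 ≠ 1) :
    h n x ε = F n ε x / (1 - x ^ 3) := by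
  have h1 : (1:ℝ) - x ^ 3 ≠ 0 := by intro hc; apply hx; linarith
  unfold h F S
  field_simp
  ring

/-- Lipschitz bound for `F` on `[1,2]`. -/
lemma F_lip (n : ℕ) (hn : 2 ≤ n) (ε : ℝ) :
    ∃ L : ℝ, 0 ≤ L ∧ ∀ x ∈ Set.Icc (1:ℝ) 2, ∀ y ∈ Set.Icc (1:ℝ) 2,
      |F n ε x - F n ε y| ≤ L * |x - y| := by
  have hF := contDiffOn_F n hn ε
  have hopen : IsOpen (Set.Ioi (0:ℝ)) := isOpen_Ioi
  have hderiv : ContinuousOn (deriv (F n ε)) (Set.Ioi (0:ℝ)) :=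
    hF.continuousOn_deriv_of_isOpen hopen le_rfl
  have hsub : Set.Icc (1:ℝ) 2 ⊆ Set.Ioi 0 := fun x hx => lt_of_lt_of_le one_pos hx.1
  obtain ⟨C, hC⟩ := (isCompact_Icc : IsCompact (Set.Icc (1:ℝ) 2)).exists_bound_of_continuousOn
    (hderiv.mono hsub)
  refine ⟨max C 0, le_max_right _ _, ?_⟩
  intro x hx y hy
  have hdiff : ∀ z ∈ Set.Icc (1:ℝ) 2, DifferentiableAt ℝ (F n ε) z := by
    intro z hz
    have := hF.differentiableOn one_ne_zero
    exact (this.differentiableAt (hopen.mem_nhds (hsub hz)))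
  have := Convex.norm_image_sub_le_of_norm_deriv_le (C := max C 0) hdiff
    (fun z hz => (hC z hz).trans (le_max_left _ _)) (convex_Icc _ _) hy hx
  simpa [Real.norm_eq_abs] using this

/-- midpoint convexity of `1/sin` on `(0, π)`. -/
lemma inv_sin_midpoint {a b : ℝ} (ha : a ∈ Set.Ioo 0 Real.pi) (hb : b ∈ Set.Ioo 0 Real.pi) :
    1 / Real.sin ((a + b) / 2) ≤ (1 / Real.sin a + 1 / Real.sin b) / 2 := by
  obtain ⟨ha0, ha1⟩ := ha
  obtain ⟨hb0, hb1⟩ := hb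
  set m := (a + b) / 2 with hm
  set d := (a - b) / 2 with hd
  have hsa : 0 < Real.sin a := Real.sin_pos_of_pos_of_lt_pi ha0 ha1
  have hsb : 0 < Real.sin b := Real.sin_pos_of_pos_of_lt_pi hb0 hb1
  have hsm : 0 < Real.sin m :=
    Real.sin_pos_of_pos_of_lt_pi (by rw [hm]; linarith) (by rw [hm]; linarith)
  have hcd : 0 < Real.cos d :=
    Real.cos_pos_of_mem_Ioo (by constructor <;> (rw [hd]; linarith [Real.pi_pos]))
  have hae : a = m + d := by rw [hm, hd]; ring
  have hbe : b = m - d := by rw [hm, hd]; ring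
  have hsa' : Real.sin a = Real.sin m * Real.cos d + Real.cos m * Real.sin d := by
    rw [hae, Real.sin_add]
  have hsb' : Real.sin b = Real.sin m * Real.cos d - Real.cos m * Real.sin d := by
    rw [hbe, Real.sin_sub]
  have key : 2 * (Real.sin a * Real.sin b) ≤ Real.sin m * (Real.sin a + Real.sin b) := by
    rw [hsa', hsb']
    have h1 := Real.sin_sq_add_cos_sq m
    have h2 := Real.sin_sq_add_cos_sq d
    have hC1 : Real.cos d ≤ 1 := Real.cos_le_one d
    nlinarith [sq_nonneg (Real.sin m), sq_nonneg (Real.cos m), hsm.le, hcd.le,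
      mul_nonneg (mul_nonneg (sq_nonneg (Real.sin m)) hcd.le) (sub_nonneg.2 hC1),
      mul_nonneg (sq_nonneg (Real.cos m))
        (mul_nonneg (sub_nonneg.2 hC1) (by linarith : (0:ℝ) ≤ 1 + Real.cos d))]
  rw [div_add_div _ _ hsa.ne' hsb.ne', div_div, div_le_div_iff₀ hsm (by positivity)]
  nlinarith [key]

lemma sum_sin_ineq (n : ℕ) (hn : 2 ≤ n) :
    ∑ j ∈ Finset.Icc 1 (n-1), 1 / Real.sin (j * Real.pi / n)
      < ∑ k ∈ Finset.Icc 1 n, 1 / Real.sin ((2 * (k:ℝ) - 1) * Real.pi / (2 * n)) := by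
  have hpi := Real.pi_pos
  have hn0 : (0:ℝ) < (n:ℝ) := by positivity
  set a : ℕ → ℝ := fun k => 1 / Real.sin ((2 * (k:ℝ) - 1) * Real.pi / (2 * n)) with ha
  have hmem : ∀ k : ℕ, 1 ≤ k → k ≤ n → (2 * (k:ℝ) - 1) * Real.pi / (2 * n) ∈ Set.Ioo 0 Real.pi := by
    intro k hk1 hk2
    have hk1' : (1:ℝ) ≤ (k:ℝ) := by exact_mod_cast hk1
    have hk2' : (k:ℝ) ≤ (n:ℝ) := by exact_mod_cast hk2
    constructor
    · have : (0:ℝ) < (2*(k:ℝ)-1) * Real.pi := by nlinarith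
      positivity
    · rw [div_lt_iff₀ (by positivity)]; nlinarith
  have hapos : ∀ k : ℕ, 1 ≤ k → k ≤ n → 0 < a k := by
    intro k hk1 hk2
    obtain ⟨m0, m1⟩ := hmem k hk1 hk2
    have := Real.sin_pos_of_pos_of_lt_pi m0 m1
    positivity
  have hpt : ∀ j ∈ Finset.Icc 1 (n-1),
      1 / Real.sin (j * Real.pi / n) ≤ (a j + a (j+1)) / 2 := by
    intro j hj
    simp only [Finset.mem_Icc] at hj
    have hj1 := hj.1
    have hj2 : j + 1 ≤ n := by omega
    have h1 := hmem j hj1 (by omega)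
    have h2 := hmem (j+1) (by omega) hj2
    have key := inv_sin_midpoint h1 h2
    have hmid : ((2 * (j:ℝ) - 1) * Real.pi / (2 * n) + (2 * ((j:ℕ)+1:ℕ) - 1) * Real.pi / (2 * n)) / 2
        = j * Real.pi / n := by
      push_cast
      field_simp
      ring
    rw [hmid] at key
    calc 1 / Real.sin (j * Real.pi / n) ≤ (1 / Real.sin ((2 * (j:ℝ) - 1) * Real.pi / (2 * n))
          + 1 / Real.sin ((2 * ((j:ℕ)+1:ℕ) - 1) * Real.pi / (2 * n))) / 2 := key
      _ = (a j + a (j+1)) / 2 := by rw [ha]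
  have hsum1 : ∑ j ∈ Finset.Icc 1 (n-1), 1 / Real.sin (j * Real.pi / n)
      ≤ ∑ j ∈ Finset.Icc 1 (n-1), (a j + a (j+1)) / 2 := Finset.sum_le_sum hpt
  have hshift : ∑ j ∈ Finset.Icc 1 (n-1), a (j+1) = ∑ j ∈ Finset.Icc 2 n, a j := by
    apply Finset.sum_nbij' (fun i => i + 1) (fun i => i - 1)
    · intro i hi; simp only [Finset.mem_Icc] at *; omega
    · intro i hi; simp only [Finset.mem_Icc] at *; omega
    · intro i hi; simp only [Finset.mem_Icc] at *; omega
    · intro i hi; simp only [Finset.mem_Icc] at hi; congr 1; omega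
    · intro i hi; rfl
  have htop : ∑ j ∈ Finset.Icc 1 n, a j = ∑ j ∈ Finset.Icc 1 (n-1), a j + a n := by
    have : n = (n-1) + 1 := by omega
    rw [this, Finset.sum_Icc_succ_top (by omega)]
    congr 1 <;> omega
  have hbot : ∑ j ∈ Finset.Icc 1 n, a j = a 1 + ∑ j ∈ Finset.Icc 2 n, a j := by
    have h1 : (1:ℕ) ∈ Finset.Icc 1 n := by simp; omega
    rw [← Finset.add_sum_erase _ a h1]
    congr 1
    rw [Finset.Icc_erase_left]
    rw [← Finset.Icc_add_one_left_eq_Ioc]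
    rfl
  have ha1 := hapos 1 le_rfl (by omega)
  have han := hapos n (by omega) le_rfl
  calc ∑ j ∈ Finset.Icc 1 (n-1), 1 / Real.sin (j * Real.pi / n)
      ≤ ∑ j ∈ Finset.Icc 1 (n-1), (a j + a (j+1)) / 2 := hsum1
    _ = (∑ j ∈ Finset.Icc 1 (n-1), a j + ∑ j ∈ Finset.Icc 1 (n-1), a (j+1)) / 2 := by
        rw [← Finset.sum_add_distrib, ← Finset.sum_div]
    _ = (∑ j ∈ Finset.Icc 1 n, a j - a n + (∑ j ∈ Finset.Icc 1 n, a j - a 1)) / 2 := by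
        rw [hshift]; linarith [htop, hbot]
    _ < ∑ j ∈ Finset.Icc 1 n, a j := by linarith

lemma S_one (n : ℕ) (hn : 2 ≤ n) (ε : ℝ) :
    S n ε 1 = (1 - ε) / 4 * ∑ k ∈ Finset.Icc 1 n,
      1 / Real.sin ((2 * (k:ℝ) - 1) * Real.pi / (2 * n)) := by
  unfold S
  rw [Finset.mul_sum]
  apply Finset.sum_congr rfl
  intro k hk
  have hmem := phi_mem n k hn hk
  have hs : 0 < Real.sin (phi n k / 2) :=
    Real.sin_pos_of_pos_of_lt_pi hmem.1 hmem.2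
  have hphi2 : phi n k / 2 = (2 * (k:ℝ) - 1) * Real.pi / (2 * n) := by
    unfold phi; ring
  set s := Real.sin (phi n k / 2) with hsdef
  have hcos : Real.cos (phi n k) = 1 - 2 * s ^ 2 := by
    rw [show phi n k = 2 * (phi n k / 2) by ring, Real.cos_two_mul', Real.cos_sq']
    ring
  have hden : (1 + (1:ℝ) ^ 2 - 2 * 1 * Real.cos (phi n k)) = (2 * s) ^ (2:ℕ) := by
    rw [hcos]; ring
  have hrpow : ((2 * s) ^ (2:ℕ) : ℝ) ^ ((3:ℝ)/2) = 8 * s ^ (3:ℕ) := by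
    rw [← Real.rpow_natCast (2*s) 2, ← Real.rpow_mul (by positivity)]
    norm_num
    ring
  rw [hden, hrpow, hcos, ← hphi2, ← hsdef]
  have h8 : (8:ℝ) * s ^ (3:ℕ) ≠ 0 := by positivity
  field_simp
  ring

lemma F_one_neg (n : ℕ) (hn : 2 ≤ n) (ε : ℝ) (hε : ε ∈ Set.Ioo (0:ℝ) 1) :
    F n ε 1 < 0 := by
  have hkn : (n:ℝ) * kn n
      = (1/4) * ∑ j ∈ Finset.Icc 1 (n-1), 1 / Real.sin (j * Real.pi / n) := by
    unfold kn
    have hn0 : (n:ℝ) ≠ 0 := by positivity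
    field_simp
    ring_nf
    exact Finset.sum_congr rfl fun x _ => by ring_nf
  have key := sum_sin_ineq n hn
  have hS := S_one n hn ε
  unfold F
  rw [hS, hkn]
  have hε1 : 0 < 1 - ε := by linarith [hε.2]
  nlinarith [key, hε1]

end RosetteAux

open Real Set Filter Topology RosetteAux in
set_option maxHeartbeats 1000000 in
/-- For `n ≥ 2`, `ε ∈ (0,1)`, there exists `μ̂ > 0` such that for every `μ > μ̂`
the equation `h(x, ε) = μ` has exactly one solution `x ∈ (1, ∞)`. -/
theorem unique_cc_gt_one_for_large_mu (n : ℕ) (hn : 2 ≤ n) (ε : ℝ)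
    (hε : ε ∈ Set.Ioo (0 : ℝ) 1) :
    ∃ muHat : ℝ, 0 < muHat ∧ ∀ μ : ℝ, muHat < μ →
      ∃! x : ℝ, x ∈ Set.Ioi (1 : ℝ) ∧ h n x ε = μ := by
  obtain ⟨C, hC0, hC⟩ := S_bound n hn ε hε
  obtain ⟨L, hL0, hL⟩ := F_lip n hn ε
  have hK := kn_nonneg n hn
  have hKn : 0 ≤ (n:ℝ) * kn n := mul_nonneg (by positivity) hK
  set muHat : ℝ := max C (L / 3) + 1 with hmu
  have hmuHat0 : 0 < muHat := by
    have := le_max_left C (L/3)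
    simp only [hmu]; positivity
  refine ⟨muHat, hmuHat0, ?_⟩
  intro μ hμ
  have hμ0 : 0 < μ := lt_trans hmuHat0 hμ
  have hCμ : C < μ := lt_of_le_of_lt (by simp [hmu]; linarith [le_max_left C (L/3)]) hμ
  have hLμ : L / 3 < μ := lt_of_le_of_lt (by simp [hmu]; linarith [le_max_right C (L/3)]) hμ
  have hone3 : ∀ x : ℝ, 1 < x → 1 < x ^ 3 := by
    intro x hx; exact one_lt_pow₀ hx (by norm_num)
  have hone : ∀ x : ℝ, 1 < x → x ^ 3 ≠ 1 := fun x hx => (hone3 x hx).ne'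
  have honeneg : ∀ x : ℝ, 1 < x → 1 - x ^ 3 < 0 := by
    intro x hx; linarith [hone3 x hx]
  have hFeq : ∀ x : ℝ, 1 < x → (F n ε x = μ * (1 - x ^ 3) ↔ h n x ε = μ) := by
    intro x hx
    rw [h_eq n ε x (hone x hx)]
    rw [div_eq_iff (honeneg x hx).ne]
  have hbig : ∀ x : ℝ, 2 ≤ x → h n x ε ≤ C := by
    intro x hx
    have hx1 : (1:ℝ) < x := by linarith
    have hx0 : (0:ℝ) < x := by linarith
    rw [h_eq n ε x (hone x hx1), div_le_iff_of_neg (honeneg x hx1)]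
    have hSb := hC x hx0
    have hS1 : S n ε x ≤ C := (abs_le.mp hSb).2
    have h1 : x ^ 2 * S n ε x ≤ x ^ 2 * C := by nlinarith [sq_nonneg x]
    have h2 : 0 ≤ -((n:ℝ) * kn n) * (ε - x ^ 3) := by
      have : ε - x ^ 3 ≤ 0 := by nlinarith [hε.2]
      nlinarith
    have h3 : (0:ℝ) ≤ x ^ 3 - x ^ 2 - 1 := by nlinarith [sq_nonneg (x-2)]
    unfold F
    nlinarith [mul_nonneg hC0 h3, h1, h2]
  have hFc : ContinuousOn (F n ε) (Set.Ioi (0:ℝ)) := (contDiffOn_F n hn ε).continuousOn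
  have hmem1 : (1:ℝ) ∈ Set.Ioi (0:ℝ) := by norm_num
  have hFat1 : ContinuousAt (F n ε) 1 :=
    hFc.continuousAt (isOpen_Ioi.mem_nhds hmem1)
  have hF1 : F n ε 1 < 0 := F_one_neg n hn ε hε
  have htend : Tendsto (fun x => h n x ε) (𝓝[>] (1:ℝ)) atTop := by
    have g4 : Tendsto (fun x => -F n ε x) (𝓝[>] (1:ℝ)) (𝓝 (-F n ε 1)) :=
      (hFat1.neg.tendsto).mono_left nhdsWithin_le_nhds
    have g2 : Tendsto (fun x : ℝ => x ^ 3 - 1) (𝓝[>] (1:ℝ)) (𝓝[>] 0) := by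
      apply tendsto_nhdsWithin_of_tendsto_nhds_of_eventually_within
      · have : Tendsto (fun x : ℝ => x ^ 3 - 1) (𝓝 (1:ℝ)) (𝓝 ((1:ℝ)^3 - 1)) :=
          (continuous_pow 3).sub continuous_const |>.tendsto 1
        simpa using this.mono_left nhdsWithin_le_nhds
      · filter_upwards [self_mem_nhdsWithin] with x hx
        exact sub_pos.mpr (hone3 x hx)
    have g3 : Tendsto (fun x : ℝ => (x ^ 3 - 1)⁻¹) (𝓝[>] (1:ℝ)) atTop :=
      tendsto_inv_nhdsGT_zero.comp g2
    have g5 : Tendsto (fun x => -F n ε x * (x ^ 3 - 1)⁻¹) (𝓝[>] (1:ℝ)) atTop :=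
      g4.pos_mul_atTop (by linarith) g3
    apply g5.congr'
    filter_upwards [self_mem_nhdsWithin] with x hx
    have hx1 : (1:ℝ) < x := hx
    rw [h_eq n ε x (hone x hx1)]
    have hne : x ^ 3 - 1 ≠ 0 := sub_ne_zero.mpr (hone x hx1)
    have hne2 : (1:ℝ) - x ^ 3 ≠ 0 := (honeneg x hx1).ne
    field_simp
    ring
  have hev : ∀ᶠ x in 𝓝[>] (1:ℝ), μ < h n x ε ∧ x < 2 := by
    refine (htend.eventually_gt_atTop μ).and ?_
    have : Tendsto (fun x : ℝ => x) (𝓝[>] (1:ℝ)) (𝓝 1) :=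
      tendsto_id.mono_left nhdsWithin_le_nhds
    exact this.eventually_lt_const (by norm_num)
  obtain ⟨x₁, hx₁, hx₁mem⟩ := (hev.and self_mem_nhdsWithin).exists
  have hx₁gt : (1:ℝ) < x₁ := hx₁mem
  have hx₁lt2 : x₁ < 2 := hx₁.2
  have hhx₁ : μ < h n x₁ ε := hx₁.1
  have hsub2 : Set.Icc x₁ 2 ⊆ Set.Ioi (0:ℝ) := by
    intro z hz; exact lt_trans one_pos (lt_of_lt_of_le hx₁gt hz.1)
  have hcont : ContinuousOn (fun x => h n x ε) (Set.Icc x₁ 2) := by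
    apply ContinuousOn.congr (f := fun x => F n ε x / (1 - x ^ 3))
    · apply ContinuousOn.div (hFc.mono hsub2)
      · exact (continuous_const.sub (continuous_pow 3)).continuousOn
      · intro z hz
        exact (honeneg z (lt_of_lt_of_le hx₁gt hz.1)).ne
    · intro z hz
      exact h_eq n ε z (hone z (lt_of_lt_of_le hx₁gt hz.1))
  have hivt := intermediate_value_Icc' hx₁lt2.le hcont
  have hμmem : μ ∈ Set.Icc (h n 2 ε) (h n x₁ ε) :=
    ⟨le_trans (hbig 2 le_rfl) hCμ.le, hhx₁.le⟩
  obtain ⟨x₀, hx₀mem, hx₀⟩ := hivt hμmem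
  have hx₀gt : (1:ℝ) < x₀ := lt_of_lt_of_le hx₁gt hx₀mem.1
  have key : ∀ a b : ℝ, 1 < a → a ≤ 2 → 1 < b → b ≤ 2 →
      h n a ε = μ → h n b ε = μ → a = b := by
    intro a b ha1 ha2 hb1 hb2 hha hhb
    by_contra hne
    have hFa := (hFeq a ha1).mpr hha
    have hFb := (hFeq b hb1).mpr hhb
    have hlip := hL a ⟨ha1.le, ha2⟩ b ⟨hb1.le, hb2⟩
    have hFab : F n ε a - F n ε b = μ * (b ^ 3 - a ^ 3) := by rw [hFa, hFb]; ring
    have habs : |F n ε a - F n ε b| = μ * |b ^ 3 - a ^ 3| := by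
      rw [hFab, abs_mul, abs_of_pos hμ0]
    have hcube : 3 * |b - a| ≤ |b ^ 3 - a ^ 3| := by
      have he : b ^ 3 - a ^ 3 = (b - a) * (b ^ 2 + a * b + a ^ 2) := by ring
      rw [he, abs_mul]
      have ha2' : (1:ℝ) ≤ a ^ 2 := one_le_pow₀ ha1.le
      have hb2' : (1:ℝ) ≤ b ^ 2 := one_le_pow₀ hb1.le
      have hab : (1:ℝ) ≤ a * b := by nlinarith [ha1, hb1]
      have h3 : (3:ℝ) ≤ b ^ 2 + a * b + a ^ 2 := by linarith
      have h4 : |b ^ 2 + a * b + a ^ 2| = b ^ 2 + a * b + a ^ 2 :=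
        abs_of_pos (by linarith)
      rw [h4]
      have := mul_le_mul_of_nonneg_left h3 (abs_nonneg (b - a))
      linarith
    have h0 : 0 < |b - a| := by
      rw [abs_pos, sub_ne_zero]
      exact fun hc => hne hc.symm
    have hba : |a - b| = |b - a| := abs_sub_comm a b
    have hchain : μ * (3 * |b - a|) ≤ L * |b - a| := by
      calc μ * (3 * |b - a|) = μ * 3 * |b - a| := by ring
        _ ≤ μ * |b ^ 3 - a ^ 3| := by
              have := mul_le_mul_of_nonneg_left hcube hμ0.le
              linarith
        _ = |F n ε a - F n ε b| := habs.symm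
        _ ≤ L * |a - b| := hlip
        _ = L * |b - a| := by rw [hba]
    have hstep : L * |b - a| < 3 * μ * |b - a| :=
      mul_lt_mul_of_pos_right (by linarith) h0
    have heq' : μ * (3 * |b - a|) = 3 * μ * |b - a| := by ring
    linarith
  have hle2 : ∀ z : ℝ, 1 < z → h n z ε = μ → z ≤ 2 := by
    intro z hz1 hz2
    by_contra hzc
    push_neg at hzc
    have := hbig z hzc.le
    rw [hz2] at this
    linarith
  refine ⟨x₀, ⟨hx₀gt, hx₀⟩, ?_⟩
  rintro y ⟨hy1, hy2⟩
  exact key y x₀ hy1 (hle2 y hy1 hy2) hx₀gt hx₀mem.2 hy2 hx₀
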